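/- With the inductive construction a_{m+1}(t) = a_m(t - 2^{m-1} r) ± a_m(-t - 2^{m-1} r) (sign + if m odd, - if m even) starting from the odd step function a_1(t) = c·sign(t)·1_{[-r,r]}(t) with c = (2^{k-1} r)^{-k} φ(r), one has for all m ≥ 1: ∫ a_m(t) t^ℓ dt = 0 for all integers 0 ≤ ℓ ≤ m - 1, and ∫ a_m(t) t^m dt = C_{m,k} φ(r) r^{m+1-k} where C_{m,k} > 0 satisfies the recursion C_{m+1,k} = (m+1) 2^m C_{m,k} with C_{1,k} = (2^{k-1})^{-k}. -/

import Mathlib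

open MeasureTheory

private lemma my_integrable_aux {f g : ℝ → ℝ} (hf : Measurable f) (hg : Continuous g)
    {B R : ℝ} (hR : 0 ≤ R) (hb : ∀ t, |f t| ≤ B) (hs : ∀ t, R < |t| → f t = 0) :
    Integrable (fun t => f t * g t) := by
  have hB : 0 ≤ B := (abs_nonneg _).trans (hb 0)
  obtain ⟨M, hM⟩ := (isCompact_Icc (a := -R) (b := R)).exists_bound_of_continuousOn
    hg.continuousOn
  have hM0 : 0 ≤ M := (norm_nonneg _).trans (hM 0 (Set.mem_Icc.mpr ⟨by linarith, hR⟩))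
  refine Integrable.mono' (g := Set.indicator (Set.Icc (-R) R) fun _ => B * M)
    ((integrable_indicator_iff measurableSet_Icc).2
      (integrableOn_const measure_Icc_lt_top.ne))
    (hf.mul hg.measurable).aestronglyMeasurable ?_
  filter_upwards with t
  by_cases ht : t ∈ Set.Icc (-R) R
  · rw [Set.indicator_of_mem ht]
    have : ‖f t * g t‖ = |f t| * ‖g t‖ := by rw [norm_mul, Real.norm_eq_abs]
    rw [this]
    exact mul_le_mul (hb t) (hM t ht) (norm_nonneg _) hB
  · rw [Set.indicator_of_notMem ht]
    have hRt : R < |t| := by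
      by_contra hcon
      exact ht (abs_le.mp (not_lt.mp hcon))
    simp [hs t hRt]

private lemma my_integral_odd {f : ℝ → ℝ} (h : ∀ t, f (-t) = -f t) :
    (∫ t, f t) = 0 := by
  have h1 : (∫ t, f (-t)) = ∫ t, f t := integral_neg_eq_self f volume
  simp_rw [h, integral_neg] at h1
  linarith

/-- Moments of the iterated construction: vanishing moments up to order `m - 1`
and the explicit top moment `∫ a_m(t) t^m dt = C_{m,k} φ(r) r^{m+1-k}`, where
`C_{m,k} > 0` satisfies `C_{m+1,k} = (m+1) 2^m C_{m,k}` and `C_{1,k} = (2^{k-1})^{-k}`. -/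
theorem stmt6 (k : ℕ) (hk : 1 ≤ k) (r : ℝ) (hr : 0 < r) (φr : ℝ)
    (hφ0 : 0 ≤ φr) (hφ1 : φr ≤ 1) (a : ℕ → ℝ → ℝ)
    (ha1 : ∀ t, a 1 t =
      if 0 < t ∧ t ≤ r then ((2 ^ (k - 1) * r) ^ k)⁻¹ * φr
      else if -r ≤ t ∧ t < 0 then -(((2 ^ (k - 1) * r) ^ k)⁻¹ * φr)
      else 0)
    (hrec : ∀ m, 1 ≤ m → ∀ t,
      a (m + 1) t =
        if Even m
        then a m (t - 2 ^ (m - 1) * r) - a m (-t - 2 ^ (m - 1) * r)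
        else a m (t - 2 ^ (m - 1) * r) + a m (-t - 2 ^ (m - 1) * r)) :
    ∃ Ck : ℕ → ℝ,
      Ck 1 = (((2 : ℝ) ^ (k - 1)) ^ k)⁻¹ ∧
      (∀ m, 1 ≤ m → Ck (m + 1) = ((m : ℝ) + 1) * 2 ^ m * Ck m) ∧
      ∀ m, 1 ≤ m →
        0 < Ck m ∧
        (∀ l : ℕ, l ≤ m - 1 → (∫ t, a m t * t ^ l) = 0) ∧
        (∫ t, a m t * t ^ m) = Ck m * φr * r ^ ((m : ℤ) + 1 - k) := by
  classical
  have hr' : r ≠ 0 := hr.ne'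
  set c : ℝ := ((2 ^ (k - 1) * r) ^ k)⁻¹ * φr with hc
  let Ck : ℕ → ℝ := fun m =>
    Nat.rec (motive := fun _ => ℝ) 1
      (fun n C => if n = 0 then (((2 : ℝ) ^ (k - 1)) ^ k)⁻¹ else ((n : ℝ) + 1) * 2 ^ n * C) m
  have hCk1 : Ck 1 = (((2 : ℝ) ^ (k - 1)) ^ k)⁻¹ := by simp [Ck]
  have hCkrec : ∀ m, 1 ≤ m → Ck (m + 1) = ((m : ℝ) + 1) * 2 ^ m * Ck m := by
    intro m hm
    have hm0 : m ≠ 0 := by omega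
    simp [Ck, hm0]
  have hCkpos : ∀ m, 1 ≤ m → 0 < Ck m := by
    intro m hm
    induction m with
    | zero => omega
    | succ n ih =>
      rcases Nat.eq_zero_or_pos n with rfl | hn
      · have e : (0 : ℕ) + 1 = 1 := rfl
        rw [e, hCk1]; positivity
      · rw [hCkrec n hn]
        have := ih hn
        positivity
  have key : ∀ m, 1 ≤ m → Measurable (a m) ∧ (∀ t, a m (-t) = (-1) ^ m * a m t) ∧
      (∃ B R : ℝ, 0 ≤ R ∧ (∀ t, |a m t| ≤ B) ∧ (∀ t, R < |t| → a m t = 0)) ∧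
      (∀ l : ℕ, l ≤ m - 1 → (∫ t, a m t * t ^ l) = 0) ∧
      (∫ t, a m t * t ^ m) = Ck m * φr * r ^ ((m : ℤ) + 1 - k) := by
    intro m hm
    induction m, hm using Nat.le_induction with
    | base =>
      -- measurability of a 1
      have hfun : a 1 = fun t => if 0 < t ∧ t ≤ r then c else if -r ≤ t ∧ t < 0 then -c else 0 :=
        funext ha1
      have hmeas1 : Measurable (a 1) := by
        rw [hfun]
        exact Measurable.ite (measurableSet_Ioc (a := (0:ℝ)) (b := r)) measurable_const
          (Measurable.ite (measurableSet_Ico (a := -r) (b := (0:ℝ))) measurable_const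
            measurable_const)
      -- parity
      have hodd1 : ∀ t, a 1 (-t) = (-1) ^ 1 * a 1 t := by
        intro t
        rw [ha1, ha1, pow_one]
        by_cases h1 : 0 < t ∧ t ≤ r
        · rw [if_neg (fun h => by linarith [h.1, h1.1]),
            if_pos (⟨by linarith [h1.2], by linarith [h1.1]⟩ : -r ≤ -t ∧ -t < 0),
            if_pos h1]
          ring
        · by_cases h2 : -r ≤ t ∧ t < 0
          · rw [if_pos (⟨by linarith [h2.2], by linarith [h2.1]⟩ : 0 < -t ∧ -t ≤ r),
              if_neg h1, if_pos h2]
            ring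
          · rw [if_neg (fun h => h2 ⟨by linarith [h.2], by linarith [h.1]⟩),
              if_neg (fun h => h1 ⟨by linarith [h.2], by linarith [h.1]⟩),
              if_neg h1, if_neg h2]
            ring
      -- representation of the integrand
      have hrepr : ∀ l : ℕ, (fun t => a 1 t * t ^ l) = fun t =>
          Set.indicator (Set.Ioc 0 r) (fun u => c * u ^ l) t +
          Set.indicator (Set.Ico (-r) 0) (fun u => -c * u ^ l) t := by
        intro l
        funext t
        rw [ha1 t]
        by_cases h1 : 0 < t ∧ t ≤ r
        · rw [if_pos h1, Set.indicator_of_mem (Set.mem_Ioc.mpr h1),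
            Set.indicator_of_notMem (fun h => by
              have hh := Set.mem_Ico.mp h; linarith [h1.1, hh.2])]
          ring
        · by_cases h2 : -r ≤ t ∧ t < 0
          · rw [if_neg h1, if_pos h2,
              Set.indicator_of_notMem (fun h => h1 (Set.mem_Ioc.mp h)),
              Set.indicator_of_mem (Set.mem_Ico.mpr h2)]
            ring
          · rw [if_neg h1, if_neg h2,
              Set.indicator_of_notMem (fun h => h1 (Set.mem_Ioc.mp h)),
              Set.indicator_of_notMem (fun h => h2 (Set.mem_Ico.mp h))]
            ring
      have hbase : ∀ l : ℕ, (∫ t, a 1 t * t ^ l)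
          = c * ((r ^ (l + 1) - 0 ^ (l + 1)) / (l + 1))
            + (-c) * ((0 ^ (l + 1) - (-r) ^ (l + 1)) / (l + 1)) := by
        intro l
        have hI1 : IntegrableOn (fun u : ℝ => c * u ^ l) (Set.Ioc 0 r) :=
          (continuous_const.mul (continuous_pow l)).integrableOn_Ioc
        have hI2 : IntegrableOn (fun u : ℝ => -c * u ^ l) (Set.Ico (-r) 0) :=
          ((continuous_const.mul (continuous_pow l)).integrableOn_Icc).mono_set Set.Ico_subset_Icc_self
        rw [hrepr l,
          integral_add ((integrable_indicator_iff measurableSet_Ioc).2 hI1)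
            ((integrable_indicator_iff measurableSet_Ico).2 hI2),
          integral_indicator measurableSet_Ioc, integral_indicator measurableSet_Ico,
          integral_Ico_eq_integral_Ioo, ← integral_Ioc_eq_integral_Ioo,
          ← intervalIntegral.integral_of_le hr.le,
          ← intervalIntegral.integral_of_le (by linarith : (-r : ℝ) ≤ 0),
          intervalIntegral.integral_const_mul, intervalIntegral.integral_const_mul,
          integral_pow, integral_pow]
      refine ⟨hmeas1, hodd1, ⟨|c|, r, hr.le, ?_, ?_⟩, ?_, ?_⟩
      · intro t
        rw [ha1]
        split_ifs <;> simp [le_abs_self, abs_neg, abs_nonneg]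
      · intro t ht
        rcases lt_abs.mp ht with h | h <;>
          · rw [ha1, if_neg (fun hh => by linarith [hh.1, hh.2]),
              if_neg (fun hh => by linarith [hh.1, hh.2])]
      · intro l hl
        interval_cases l
        rw [hbase 0]
        norm_num
      · rw [hbase 1]
        have hne1 : ((2 : ℝ) ^ (k - 1)) ^ k ≠ 0 := by positivity
        have hne2 : (r : ℝ) ^ k ≠ 0 := pow_ne_zero _ hr'
        rw [hCk1, hc]
        have hz : r ^ (((1 : ℕ) : ℤ) + 1 - (k : ℤ)) = r ^ 2 / r ^ k := by
          rw [show ((1 : ℕ) : ℤ) + 1 - (k : ℤ) = ((2 : ℕ) : ℤ) - ((k : ℕ) : ℤ) by push_cast; ring,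
            zpow_sub₀ hr', zpow_natCast, zpow_natCast]
        rw [hz, mul_pow]
        field_simp
        ring
    | succ m hm ih =>
      obtain ⟨hmeas, hodd, ⟨B, R, hR0, hb, hsupp⟩, hvan, htop⟩ := ih
      set s : ℝ := 2 ^ (m - 1) * r with hs
      have hs0 : 0 < s := by positivity
      set ε : ℝ := (if Even m then -1 else 1 : ℝ) with hε
      have hrec' : ∀ t, a (m + 1) t = a m (t - s) + ε * a m (-t - s) := by
        intro t
        rw [hrec m hm t]
        by_cases h : Even m <;> simp [hε, h] <;> ring
      have hIntg : ∀ g : ℝ → ℝ, Continuous g → Integrable (fun t => a m t * g t) :=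
        fun g hg => my_integrable_aux hmeas hg hR0 hb hsupp
      have hIntl : ∀ l : ℕ, Integrable (fun t => a m t * t ^ l) :=
        fun l => hIntg _ (continuous_pow l)
      -- vanishing of the (m+1)-st moment of a m by parity
      have hmom_succ : (∫ t, a m t * t ^ (m + 1)) = 0 := by
        apply my_integral_odd
        intro t
        rw [hodd t]
        rcases Nat.even_or_odd m with h | h
        · rw [h.neg_one_pow, (h.add_one).neg_pow]
          ring
        · rw [h.neg_one_pow, (h.add_one).neg_pow]
          ring
      -- reduction of moments of a (m+1) to shifted moments of a m
      have hJ : ∀ l : ℕ, (∫ t, a (m + 1) t * t ^ l)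
          = (1 + ε * (-1) ^ l) * ∫ u, a m u * (u + s) ^ l := by
        intro l
        have hF : Integrable (fun u => a m u * (u + s) ^ l) :=
          hIntg _ ((continuous_id.add continuous_const).pow l)
        have e1 : (fun t => a m (t - s) * t ^ l)
            = fun t => (fun u => a m u * (u + s) ^ l) (t - s) := by
          funext t
          simp [sub_add_cancel]
        have e2 : (fun t => ε * (a m (-t - s) * t ^ l))
            = fun t => (fun u => ε * ((-1 : ℝ) ^ l * (a m u * (u + s) ^ l))) (-(t + s)) := by
          funext t
          show ε * (a m (-t - s) * t ^ l)
            = ε * ((-1 : ℝ) ^ l * (a m (-(t + s)) * (-(t + s) + s) ^ l))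
          rw [show (-(t + s) : ℝ) = -t - s by ring, show (-t - s + s : ℝ) = -t by ring]
          rcases Nat.even_or_odd l with hl | hl
          · rw [hl.neg_pow t, hl.neg_one_pow]; ring
          · rw [hl.neg_pow t, hl.neg_one_pow]; ring
        have i1 : Integrable (fun t => a m (t - s) * t ^ l) := by
          rw [e1]; exact hF.comp_sub_right s
        have i2 : Integrable (fun t => ε * (a m (-t - s) * t ^ l)) := by
          rw [e2]
          exact (((hF.const_mul ((-1 : ℝ) ^ l)).const_mul ε).comp_neg).comp_add_right s
        have hpt : (fun t => a (m + 1) t * t ^ l)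
            = fun t => a m (t - s) * t ^ l + ε * (a m (-t - s) * t ^ l) := by
          funext t
          rw [hrec' t]
          ring
        rw [hpt, integral_add i1 i2]
        have v1 : (∫ t, a m (t - s) * t ^ l) = ∫ u, a m u * (u + s) ^ l := by
          rw [e1]
          exact integral_sub_right_eq_self (fun u => a m u * (u + s) ^ l) s
        have v2 : (∫ t, ε * (a m (-t - s) * t ^ l))
            = ε * ((-1 : ℝ) ^ l * ∫ u, a m u * (u + s) ^ l) := by
          rw [e2]
          rw [integral_add_right_eq_self
            (fun x => (fun u => ε * ((-1 : ℝ) ^ l * (a m u * (u + s) ^ l))) (-x)) s]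
          rw [integral_neg_eq_self
            (fun u => ε * ((-1 : ℝ) ^ l * (a m u * (u + s) ^ l))) volume]
          rw [integral_const_mul, integral_const_mul]
        rw [v1, v2]
        ring
      -- binomial expansion of shifted moments
      have hbinom : ∀ l : ℕ, (∫ u, a m u * (u + s) ^ l)
          = ∑ j ∈ Finset.range (l + 1),
              (∫ t, a m t * t ^ j) * (s ^ (l - j) * (l.choose j : ℝ)) := by
        intro l
        have hpt : (fun u => a m u * (u + s) ^ l)
            = fun u => ∑ j ∈ Finset.range (l + 1),
                (a m u * u ^ j) * (s ^ (l - j) * (l.choose j : ℝ)) := by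
          funext u
          rw [add_pow, Finset.mul_sum]
          exact Finset.sum_congr rfl fun j _ => by ring
        rw [hpt, integral_finset_sum _ (fun j _ => (hIntl j).mul_const _)]
        exact Finset.sum_congr rfl fun j _ => integral_mul_const _ _
      have hvan' : ∀ l : ℕ, l ≤ m - 1 → (∫ u, a m u * (u + s) ^ l) = 0 := by
        intro l hl
        rw [hbinom l]
        exact Finset.sum_eq_zero fun j hj => by
          rw [hvan j (by have := Finset.mem_range.mp hj; omega), zero_mul]
      have hJtop : (∫ u, a m u * (u + s) ^ (m + 1))
          = ((m : ℝ) + 1) * s * (Ck m * φr * r ^ ((m : ℤ) + 1 - k)) := by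
        rw [hbinom (m + 1), Finset.sum_eq_single m]
        · rw [htop, Nat.choose_succ_self_right, show m + 1 - m = 1 by omega, pow_one]
          push_cast
          ring
        · intro j hj hjm
          have hj' : j < m + 2 := Finset.mem_range.mp hj
          rcases lt_or_gt_of_ne hjm with h | h
          · rw [hvan j (by omega), zero_mul]
          · rw [show j = m + 1 by omega, hmom_succ, zero_mul]
        · intro h
          exact absurd (Finset.mem_range.mpr (by omega)) h
      have hfac_top : (1 + ε * (-1 : ℝ) ^ (m + 1)) = 2 := by
        rcases Nat.even_or_odd m with h | h
        · rw [hε, if_pos h, (h.add_one).neg_one_pow]; ring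
        · rw [hε, if_neg (by simpa [Nat.even_iff, Nat.odd_iff] using h),
            (h.add_one).neg_one_pow]
          ring
      have hfac_m : (1 + ε * (-1 : ℝ) ^ m) = 0 := by
        rcases Nat.even_or_odd m with h | h
        · rw [hε, if_pos h, h.neg_one_pow]; ring
        · rw [hε, if_neg (by simpa [Nat.even_iff, Nat.odd_iff] using h), h.neg_one_pow]
          ring
      -- measurability of a (m+1)
      have hmeas' : Measurable (a (m + 1)) := by
        have : a (m + 1) = fun t => a m (t - s) + ε * a m (-t - s) := funext hrec'
        rw [this]
        exact (hmeas.comp (measurable_id.sub measurable_const)).add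
          ((hmeas.comp (measurable_neg.sub measurable_const)).const_mul ε)
      -- parity of a (m+1)
      have hodd' : ∀ t, a (m + 1) (-t) = (-1) ^ (m + 1) * a (m + 1) t := by
        intro t
        rw [hrec', hrec', neg_neg]
        rcases Nat.even_or_odd m with h | h
        · rw [(h.add_one).neg_one_pow, hε, if_pos h]; ring
        · rw [(h.add_one).neg_one_pow, hε,
            if_neg (by simpa [Nat.even_iff, Nat.odd_iff] using h)]
          ring
      refine ⟨hmeas', hodd', ⟨B + B, R + s, by linarith, ?_, ?_⟩, ?_, ?_⟩
      · intro t
        have hε1 : |ε| = 1 := by rw [hε]; split_ifs <;> norm_num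
        rw [hrec' t]
        have h := abs_add_le (a m (t - s)) (ε * a m (-t - s))
        rw [abs_mul, hε1, one_mul] at h
        exact h.trans (add_le_add (hb _) (hb _))
      · intro t ht
        have h1 : R < |t - s| := by
          have := abs_sub_abs_le_abs_sub t s
          rw [abs_of_pos hs0] at this
          linarith
        have h2 : R < |-t - s| := by
          rw [show (-t - s : ℝ) = -(t + s) by ring, abs_neg]
          have := abs_sub_abs_le_abs_sub t (-s)
          rw [abs_neg, abs_of_pos hs0, sub_neg_eq_add] at this
          linarith
        rw [hrec' t, hsupp _ h1, hsupp _ h2]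
        ring
      · intro l hl
        have hl' : l ≤ m := by omega
        rw [hJ l]
        rcases eq_or_lt_of_le hl' with rfl | hlt
        · rw [hfac_m, zero_mul]
        · rw [hvan' l (by omega), mul_zero]
      · rw [hJ (m + 1), hfac_top, hJtop, hCkrec m hm]
        have h2 : (2 : ℝ) * 2 ^ (m - 1) = 2 ^ m := by
          rw [← pow_succ']
          congr 1
          omega
        have h3 : r ^ (((m + 1 : ℕ) : ℤ) + 1 - (k : ℤ)) = r * r ^ ((m : ℤ) + 1 - (k : ℤ)) := by
          rw [show ((m + 1 : ℕ) : ℤ) + 1 - (k : ℤ) = 1 + ((m : ℤ) + 1 - (k : ℤ)) by push_cast; ring,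
            zpow_add₀ hr', zpow_one]
        rw [h3, hs, ← h2]
        ring
  exact ⟨Ck, hCk1, hCkrec, fun m hm =>
    ⟨hCkpos m hm, (key m hm).2.2.2.1, (key m hm).2.2.2.2⟩⟩
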